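/- Let (λ_n)_{n∈ℕ} be a sequence of nonzero real numbers satisfying a Weyl-type counting bound of order m. Then for every complex number z with Re z > (m+1)/2, the function t ↦ Σ_n λ_n·exp(−t·λ_n²) is integrable against t^{(z+1/2)−1} dt on (0,∞), and ∫₀^∞ (Σ_n λ_n·exp(−t·λ_n²))·t^{(z+1/2)−1} dt = Γ(z+1/2)·Σ_n sgn(λ_n)·|λ_n|^{−2z}. -/

import Mathlib

open MeasureTheory Real Set

/-- A sequence `(λ_n)` of real numbers satisfies a Weyl-type counting bound of order `m`
if there is a constant `C > 0` such that for every `T ≥ 0` the set `{n : |λ_n| ≤ T}` is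
finite with cardinality at most `C·(1+T)^m`. -/
def WeylBound (lam : ℕ → ℝ) (m : ℕ) : Prop :=
  ∃ C > (0 : ℝ), ∀ T : ℝ, 0 ≤ T →
    {n : ℕ | |lam n| ≤ T}.Finite ∧ ({n : ℕ | |lam n| ≤ T}.ncard : ℝ) ≤ C * (1 + T) ^ m

/-- The complementary error function `erfc(x) = (2/√π) ∫_x^∞ exp(−ξ²) dξ`. -/
noncomputable def erfc (x : ℝ) : ℝ :=
  (2 / Real.sqrt π) * ∫ ξ in Ioi x, Real.exp (-ξ ^ 2)

private lemma sign_mul_abs_eq (x : ℝ) : Real.sign x * |x| = x := by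
  rcases lt_trichotomy x 0 with h | h | h
  · rw [Real.sign_of_neg h, abs_of_neg h]; ring
  · simp [h]
  · rw [Real.sign_of_pos h, abs_of_pos h]; ring

private lemma weyl_exists_delta {lam : ℕ → ℝ} {m : ℕ} (hlam : ∀ n, lam n ≠ 0)
    (hW : WeylBound lam m) : ∃ δ : ℝ, 0 < δ ∧ ∀ n, δ ≤ |lam n| := by
  obtain ⟨C, hC, hB⟩ := hW
  have h1 : {n : ℕ | |lam n| ≤ 1}.Finite := (hB 1 zero_le_one).1
  set F : Finset ℕ := h1.toFinset with hF
  rcases F.eq_empty_or_nonempty with hFe | hFne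
  · refine ⟨1, one_pos, fun n => ?_⟩
    by_contra h
    have hn : n ∈ F := by
      rw [hF, Set.Finite.mem_toFinset]
      exact le_of_not_ge h
    simp [hFe] at hn
  · set t := F.image fun n => |lam n| with ht
    have htne : t.Nonempty := hFne.image _
    refine ⟨t.min' htne, ?_, fun n => ?_⟩
    · obtain ⟨n0, _, hval⟩ := Finset.mem_image.mp (t.min'_mem htne)
      rw [← hval]; exact abs_pos.mpr (hlam n0)
    · by_cases hn : |lam n| ≤ 1
      · refine t.min'_le _ (Finset.mem_image_of_mem _ ?_)
        rw [hF, Set.Finite.mem_toFinset]; exact hn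
      · have hle : t.min' htne ≤ 1 := by
          obtain ⟨n0, hn0, hval⟩ := Finset.mem_image.mp (t.min'_mem htne)
          rw [← hval]
          rw [hF, Set.Finite.mem_toFinset] at hn0
          exact hn0
        linarith [not_le.mp hn]

private lemma weyl_summable {lam : ℕ → ℝ} {m : ℕ} (hlam : ∀ n, lam n ≠ 0)
    (hW : WeylBound lam m) {p : ℝ} (hp : (m : ℝ) < p) :
    Summable fun n => |lam n| ^ (-p) := by
  obtain ⟨δ, hδ, hδle⟩ := weyl_exists_delta hlam hW
  obtain ⟨C, hC, hB⟩ := hW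
  have hm0 : (0:ℝ) ≤ (m:ℝ) := Nat.cast_nonneg m
  have hp0 : 0 < p := lt_of_le_of_lt hm0 hp
  set r : ℝ := 2 ^ ((m : ℝ) - p) with hrdef
  have hr0 : 0 < r := Real.rpow_pos_of_pos two_pos _
  have hr1 : r < 1 := Real.rpow_lt_one_of_one_lt_of_neg one_lt_two (by linarith)
  set k : ℕ → ℕ := fun n => ⌊Real.logb 2 (|lam n| / δ)⌋₊ with hk
  have habs : ∀ n, 0 < |lam n| := fun n => abs_pos.mpr (hlam n)
  have hx1 : ∀ n, 1 ≤ |lam n| / δ := fun n => (one_le_div hδ).mpr (hδle n)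
  have key1 : ∀ n, δ * 2 ^ (k n) ≤ |lam n| := by
    intro n
    have h1 : ((k n : ℝ)) ≤ Real.logb 2 (|lam n| / δ) :=
      Nat.floor_le (Real.logb_nonneg one_lt_two (hx1 n))
    have h2 : (2:ℝ) ^ (k n) ≤ |lam n| / δ := by
      rw [← Real.rpow_natCast]
      calc (2:ℝ) ^ ((k n : ℝ)) ≤ 2 ^ Real.logb 2 (|lam n| / δ) :=
            Real.rpow_le_rpow_of_exponent_le one_le_two h1
        _ = |lam n| / δ := Real.rpow_logb two_pos (by norm_num) (div_pos (habs n) hδ)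
    calc δ * 2 ^ (k n) ≤ δ * (|lam n| / δ) := by
          exact mul_le_mul_of_nonneg_left h2 hδ.le
      _ = |lam n| := by field_simp
  have key2 : ∀ n, |lam n| < δ * 2 ^ (k n + 1) := by
    intro n
    have h1 : Real.logb 2 (|lam n| / δ) < ((k n + 1 : ℕ) : ℝ) := by
      push_cast; exact Nat.lt_floor_add_one _
    have h2 : |lam n| / δ < (2:ℝ) ^ (k n + 1) := by
      rw [← Real.rpow_natCast]
      calc |lam n| / δ = 2 ^ Real.logb 2 (|lam n| / δ) :=
            (Real.rpow_logb two_pos (by norm_num) (div_pos (habs n) hδ)).symm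
        _ < 2 ^ ((k n + 1 : ℕ):ℝ) := Real.rpow_lt_rpow_of_exponent_lt one_lt_two h1
    calc |lam n| = δ * (|lam n| / δ) := by field_simp
      _ < δ * 2 ^ (k n + 1) := mul_lt_mul_of_pos_left h2 hδ
  set A : ℝ := C * (1 + 2*δ) ^ m * δ ^ (-p) with hA
  have hA0 : 0 ≤ A := by positivity
  apply summable_of_sum_le (c := A * (1 - r)⁻¹)
    (fun n => Real.rpow_nonneg (abs_nonneg _) _)
  intro u
  rw [← Finset.sum_fiberwise_of_maps_to (g := k) (t := u.image k)
    (fun n hn => Finset.mem_image_of_mem k hn)]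
  have inner : ∀ j ∈ u.image k,
      (∑ n ∈ u.filter fun n => k n = j, |lam n| ^ (-p)) ≤ A * r ^ j := by
    intro j _
    have hT : (0:ℝ) ≤ δ * 2 ^ (j+1) := by positivity
    obtain ⟨hfin, hcard⟩ := hB (δ * 2 ^ (j+1)) hT
    have hcard' : (((u.filter fun n => k n = j).card : ℕ) : ℝ) ≤ C * (1 + δ * 2 ^ (j+1)) ^ m := by
      have hsub : ↑(u.filter fun n => k n = j) ⊆ {n : ℕ | |lam n| ≤ δ * 2 ^ (j+1)} := by
        intro n hn
        simp only [Finset.coe_filter, Set.mem_setOf_eq] at hn ⊢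
        rcases hn with ⟨_, hkn⟩
        have := key2 n
        rw [hkn] at this
        exact this.le
      have hcc : ((u.filter fun n => k n = j).card : ℝ)
          = ((↑(u.filter fun n => k n = j) : Set ℕ).ncard : ℝ) := by
        rw [Set.ncard_coe_finset]
      rw [hcc]
      exact le_trans (Nat.cast_le.mpr (Set.ncard_le_ncard hsub hfin)) hcard
    have hterm : ∀ n ∈ u.filter (fun n => k n = j),
        |lam n| ^ (-p) ≤ (δ * 2 ^ j) ^ (-p) := by
      intro n hn
      have hkn : k n = j := (Finset.mem_filter.mp hn).2
      have h1 := key1 n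
      rw [hkn] at h1
      exact Real.rpow_le_rpow_of_nonpos (by positivity) h1 (by linarith)
    have hb0 : (0:ℝ) ≤ (δ * 2 ^ j) ^ (-p) := Real.rpow_nonneg (by positivity) _
    have h2j : (1:ℝ) ≤ 2 ^ j := one_le_pow₀ one_le_two
    have hpow1 : (1 + δ * 2 ^ (j+1)) ^ m ≤ (1 + 2*δ) ^ m * (2:ℝ) ^ (j*m) := by
      calc (1 + δ * 2 ^ (j+1)) ^ m ≤ ((1+2*δ) * 2^j) ^ m := by
            apply pow_le_pow_left₀ (by positivity)
            calc 1 + δ * 2 ^ (j+1) = 1 + 2*δ*2^j := by ring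
              _ ≤ (1+2*δ)*2^j := by nlinarith
        _ = (1+2*δ) ^ m * (2:ℝ) ^ (j*m) := by rw [mul_pow, ← pow_mul]
    have hpow2 : (δ * (2:ℝ) ^ j) ^ (-p) = δ ^ (-p) * ((2:ℝ)^j) ^ (-p) :=
      Real.mul_rpow hδ.le (by positivity)
    have hpow3 : (2:ℝ) ^ (j*m) * ((2:ℝ)^j) ^ (-p) = r ^ j := by
      rw [← Real.rpow_natCast (2:ℝ) (j*m), ← Real.rpow_natCast (2:ℝ) j,
        ← Real.rpow_mul (by norm_num : (0:ℝ) ≤ 2),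
        ← Real.rpow_add two_pos, hrdef,
        ← Real.rpow_natCast ((2:ℝ) ^ ((m:ℝ) - p)) j,
        ← Real.rpow_mul (by norm_num : (0:ℝ) ≤ 2)]
      congr 1
      push_cast
      ring
    calc (∑ n ∈ u.filter fun n => k n = j, |lam n| ^ (-p))
        ≤ (u.filter fun n => k n = j).card • ((δ * 2 ^ j) ^ (-p)) :=
          Finset.sum_le_card_nsmul _ _ _ hterm
      _ = ((u.filter fun n => k n = j).card : ℝ) * ((δ * 2 ^ j) ^ (-p)) := by
          rw [nsmul_eq_mul]
      _ ≤ (C * (1 + δ * 2 ^ (j+1)) ^ m) * ((δ * 2 ^ j) ^ (-p)) :=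
          mul_le_mul_of_nonneg_right hcard' hb0
      _ ≤ (C * ((1 + 2*δ) ^ m * (2:ℝ) ^ (j*m))) * ((δ * 2 ^ j) ^ (-p)) := by
          apply mul_le_mul_of_nonneg_right _ hb0
          exact mul_le_mul_of_nonneg_left hpow1 hC.le
      _ = A * r ^ j := by
          rw [hpow2, ← hpow3, hA]; ring
  calc (∑ j ∈ u.image k, ∑ n ∈ u.filter fun n => k n = j, |lam n| ^ (-p))
      ≤ ∑ j ∈ u.image k, A * r ^ j := Finset.sum_le_sum inner
    _ = A * ∑ j ∈ u.image k, r ^ j := by rw [Finset.mul_sum]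
    _ ≤ A * ∑' j : ℕ, r ^ j := by
        refine mul_le_mul_of_nonneg_left ?_ hA0
        exact Summable.sum_le_tsum _ (fun _ _ => pow_nonneg hr0.le _)
          (summable_geometric_of_lt_one hr0.le hr1)
    _ = A * (1 - r)⁻¹ := by rw [tsum_geometric_of_lt_one hr0.le hr1]

private lemma integrable_tsum_aux {F : ℕ → ℝ → ℂ} {μ : Measure ℝ}
    (hF_int : ∀ i, Integrable (F i) μ)
    (hF_sum : Summable fun i => ∫ a, ‖F i a‖ ∂μ) :
    Integrable (fun a => ∑' i, F i a) μ := by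
  have h0 : ∀ i, 0 ≤ ∫ a, ‖F i a‖ ∂μ := fun i => integral_nonneg fun a => norm_nonneg _
  have hmeas : ∀ i, AEMeasurable (fun a => (‖F i a‖₊ : ENNReal)) μ :=
    fun i => (hF_int i).aestronglyMeasurable.enorm
  have hlt : ∫⁻ a, ∑' i, (‖F i a‖₊ : ENNReal) ∂μ ≠ ⊤ := by
    rw [lintegral_tsum hmeas]
    have heq : (∑' i, ∫⁻ a, (‖F i a‖₊ : ENNReal) ∂μ)
        = ENNReal.ofReal (∑' i, ∫ a, ‖F i a‖ ∂μ) := by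
      rw [ENNReal.ofReal_tsum_of_nonneg h0 hF_sum]
      exact tsum_congr fun i => (ofReal_integral_norm_eq_lintegral_enorm (hF_int i)).symm
    rw [heq]
    exact ENNReal.ofReal_ne_top
  have hae : ∀ᵐ a ∂μ, Summable fun i => ‖F i a‖ := by
    have h := ae_lt_top' (AEMeasurable.ennreal_tsum hmeas) hlt
    filter_upwards [h] with a ha
    have := ENNReal.tsum_coe_ne_top_iff_summable_coe.mp ha.ne
    simpa [coe_nnnorm] using this
  constructor
  · refine aestronglyMeasurable_of_tendsto_ae (Filter.atTop : Filter ℕ)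
      (f := fun N a => ∑ i ∈ Finset.range N, F i a)
      (fun N => Finset.aestronglyMeasurable_fun_sum _ fun i _ => (hF_int i).aestronglyMeasurable) ?_
    filter_upwards [hae] with a ha
    exact ha.of_norm.hasSum.tendsto_sum_nat
  · refine lt_of_le_of_lt (lintegral_mono fun a => ?_) hlt.lt_top
    by_cases hs : Summable fun i => ‖F i a‖₊
    · calc (‖∑' i, F i a‖₊ : ENNReal) ≤ ((∑' i, ‖F i a‖₊ : NNReal) : ENNReal) :=
            ENNReal.coe_le_coe.mpr (nnnorm_tsum_le hs)
        _ = ∑' i, (‖F i a‖₊ : ENNReal) := ENNReal.coe_tsum hs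
    · have htop : (∑' i, (‖F i a‖₊ : ENNReal)) = ⊤ := by
        by_contra h
        exact hs (NNReal.summable_coe.mp
          (by simpa using ENNReal.tsum_coe_ne_top_iff_summable_coe.mp h))
      rw [htop]
      exact le_top

open Complex in
private lemma term_integrable {s : ℂ} (hs : 0 < s.re) {P : ℝ} (hP : 0 < P) (c : ℂ) :
    Integrable (fun t : ℝ => (t:ℂ) ^ (s - 1) * (c * rexp (-P * t)))
      (volume.restrict (Ioi 0)) := by
  simp_rw [← mul_assoc, mul_comm _ c, mul_assoc]
  have this1 := Complex.GammaIntegral_convergent hs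
  rw [← mul_zero P, ← integrableOn_Ioi_comp_mul_left_iff _ _ hP] at this1
  refine (IntegrableOn.congr_fun (this1.const_mul (1 / (P:ℂ) ^ (s - 1)))
    (fun t (ht : 0 < t) => ?_) measurableSet_Ioi).const_mul _
  simp_rw [mul_comm (↑(rexp _) : ℂ), ← mul_assoc, neg_mul, ofReal_mul]
  rw [mul_cpow_ofReal_nonneg hP.le ht.le, ← mul_assoc, one_div, inv_mul_cancel₀, one_mul]
  rw [Ne, cpow_eq_zero_iff, not_and_or]
  exact Or.inl (ofReal_ne_zero.mpr hP.ne')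

open Complex in
private lemma term_norm_integral {s : ℂ} (hs : 0 < s.re) {P : ℝ} (hP : 0 < P) (c : ℂ) :
    ∫ t in Ioi (0:ℝ), ‖(t:ℂ) ^ (s - 1) * (c * rexp (-P * t))‖
      = (1/P) ^ s.re * Real.Gamma s.re * ‖c‖ := by
  have h1 := Real.integral_rpow_mul_exp_neg_mul_Ioi hs hP
  rw [← h1, ← integral_mul_const]
  refine setIntegral_congr_fun measurableSet_Ioi fun t ht => ?_
  rw [norm_mul, norm_mul, norm_cpow_eq_rpow_re_of_pos ht, sub_re, one_re,
    Complex.norm_real, Real.norm_eq_abs, Real.abs_exp, show -P * t = -(P*t) by ring]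
  ring

open Complex in
/-- The Mellin-transform identity `Γ(z+1/2)·η_D(2z) = ∫₀^∞ (Σ λ_n e^{−tλ_n²}) t^{(z+1/2)−1} dt`
for `Re z > (m+1)/2`. -/
theorem stmt_9 (m : ℕ) (hm : 0 < m) (lam : ℕ → ℝ) (hlam : ∀ n, lam n ≠ 0)
    (hW : WeylBound lam m) (z : ℂ) (hz : ((m : ℝ) + 1) / 2 < z.re) :
    IntegrableOn
      (fun t : ℝ => ((∑' n : ℕ, lam n * Real.exp (-(t * lam n ^ 2)) : ℝ) : ℂ)
        * (t : ℂ) ^ (z + 1/2 - 1)) (Ioi 0) volume ∧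
    ∫ t in Ioi (0 : ℝ),
        ((∑' n : ℕ, lam n * Real.exp (-(t * lam n ^ 2)) : ℝ) : ℂ) * (t : ℂ) ^ (z + 1/2 - 1)
      = Complex.Gamma (z + 1/2)
          * ∑' n : ℕ, (Real.sign (lam n) : ℂ) * ((|lam n| : ℝ) : ℂ) ^ (-(2 * z)) := by
  have hm1 : (1:ℝ) ≤ m := by exact_mod_cast hm
  have hzre : (m:ℝ) + 1 < 2 * z.re := by linarith
  set s : ℂ := z + 1/2 with hsdef
  have hsre : s.re = z.re + 1/2 := by
    rw [hsdef, Complex.add_re, show (1/2 : ℂ) = ((1/2 : ℝ) : ℂ) by norm_num,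
      Complex.ofReal_re]
  have hs0 : 0 < s.re := by rw [hsre]; linarith
  have habs : ∀ n, 0 < |lam n| := fun n => abs_pos.mpr (hlam n)
  have hsum' : ∀ q : ℝ, (m:ℝ) < q → Summable fun n => |lam n| ^ (-q) :=
    fun q hq => weyl_summable hlam hW hq
  have hsq : ∀ i, (0:ℝ) < lam i ^ 2 := fun i => pow_two_pos_of_ne_zero (hlam i)
  have hsqpow : ∀ i, (lam i ^ 2) ^ s.re = |lam i| ^ (2 * s.re) := by
    intro i
    rw [← _root_.sq_abs, ← Real.rpow_natCast |lam i| 2, ← Real.rpow_mul (abs_nonneg _)]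
    norm_num
  have h_sum : Summable fun i => ‖((lam i : ℝ) : ℂ)‖ / (lam i ^ 2) ^ s.re := by
    refine (hsum' (2*z.re) (by linarith)).congr fun i => ?_
    rw [hsqpow i, Complex.norm_real, Real.norm_eq_abs, hsre,
      show -(2*z.re) = (1:ℝ) - 2*(z.re+1/2) by ring,
      Real.rpow_sub (habs i), Real.rpow_one]
  have hptwise : ∀ t : ℝ, t ∈ Ioi (0:ℝ) →
      Summable fun n => lam n * rexp (-(t * lam n ^ 2)) := by
    intro t ht
    rw [Set.mem_Ioi] at ht
    set K := m + 1 with hK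
    apply Summable.of_abs
    have hsummf : Summable fun n =>
        ((K.factorial : ℝ) / t ^ K) * |lam n| ^ (-(2*(m:ℝ)+1)) := by
      refine Summable.mul_left _ (hsum' (2*(m:ℝ)+1) ?_)
      have : (0:ℝ) ≤ m := Nat.cast_nonneg m
      linarith
    refine Summable.of_nonneg_of_le (fun n => abs_nonneg _) (fun n => ?_) hsummf
    have hy : 0 < t * lam n ^ 2 := mul_pos ht (hsq n)
    have hexp : rexp (-(t * lam n ^ 2)) ≤ (K.factorial : ℝ) / (t * lam n ^ 2) ^ K := by
      rw [Real.exp_neg]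
      have h2 : (t * lam n ^ 2) ^ K / (K.factorial : ℝ) ≤ rexp (t * lam n ^ 2) :=
        Real.pow_div_factorial_le_exp _ hy.le K
      calc (rexp (t * lam n ^ 2))⁻¹ ≤ ((t * lam n ^ 2) ^ K / (K.factorial : ℝ))⁻¹ := by
            apply inv_anti₀ (by positivity) h2
        _ = (K.factorial : ℝ) / (t * lam n ^ 2) ^ K := by
            rw [inv_div]
    have hpowid : |lam n| ^ (-(2*(m:ℝ)+1)) = (|lam n| ^ (2*m+1 : ℕ))⁻¹ := by
      rw [← Real.rpow_natCast |lam n| (2*m+1), ← Real.rpow_neg (abs_nonneg _)]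
      congr 1
      push_cast
      ring
    calc |lam n * rexp (-(t * lam n ^ 2))| = |lam n| * rexp (-(t * lam n ^ 2)) := by
          rw [abs_mul, Real.abs_exp]
      _ ≤ |lam n| * ((K.factorial : ℝ) / (t * lam n ^ 2) ^ K) :=
          mul_le_mul_of_nonneg_left hexp (abs_nonneg _)
      _ = ((K.factorial : ℝ) / t ^ K) * |lam n| ^ (-(2*(m:ℝ)+1)) := by
          rw [hpowid, hK]
          have hln : lam n ^ 2 = |lam n| ^ 2 := (_root_.sq_abs _).symm
          have hne : |lam n| ≠ 0 := (habs n).ne'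
          have htne : t ≠ 0 := ht.ne'
          rw [mul_pow, hln, ← pow_mul]
          rw [show 2 * (m+1) = (2*m+1) + 1 by ring, pow_succ]
          field_simp
          ring
  set Fn : ℝ → ℂ := fun t => ((∑' n, lam n * rexp (-(t * lam n ^ 2)) : ℝ) : ℂ) with hFn
  have hF : ∀ t ∈ Ioi (0:ℝ),
      HasSum (fun i => ((lam i : ℝ) : ℂ) * rexp (-(lam i ^ 2) * t)) (Fn t) := by
    intro t ht
    have h := ((hptwise t ht).hasSum).mapL Complex.ofRealCLM
    have e : (fun i => ((lam i : ℝ) : ℂ) * (rexp (-(lam i ^ 2) * t) : ℝ))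
        = fun i => Complex.ofRealCLM (lam i * rexp (-(t * lam i ^ 2))) := by
      funext i
      rw [show -(lam i ^ 2) * t = -(t * lam i ^ 2) by ring]
      simp [Complex.ofReal_mul]
    rw [e]
    exact h
  have hp' : ∀ i, ((lam i : ℝ) : ℂ) = 0 ∨ 0 < lam i ^ 2 := fun i => Or.inr (hsq i)
  have H := hasSum_mellin hp' hs0 hF h_sum
  have hint_i : ∀ i, Integrable
      (fun t : ℝ => (t:ℂ) ^ (s - 1) * (((lam i:ℝ):ℂ) * rexp (-(lam i ^ 2) * t)))
      (volume.restrict (Ioi 0)) :=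
    fun i => term_integrable hs0 (hsq i) _
  have hnorm_sum : Summable fun i =>
      ∫ t in Ioi (0:ℝ), ‖(t:ℂ) ^ (s - 1) * (((lam i:ℝ):ℂ) * rexp (-(lam i ^ 2) * t))‖ := by
    refine ((h_sum.mul_left (Real.Gamma s.re)).congr fun i => ?_)
    rw [term_norm_integral hs0 (hsq i), one_div, Real.inv_rpow (hsq i).le]
    field_simp
  have hG : Integrable
      (fun t : ℝ => ∑' i, (t:ℂ) ^ (s - 1) * (((lam i:ℝ):ℂ) * rexp (-(lam i ^ 2) * t)))
      (volume.restrict (Ioi 0)) :=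
    integrable_tsum_aux hint_i hnorm_sum
  have hInt : IntegrableOn (fun t : ℝ => Fn t * (t:ℂ) ^ (s - 1)) (Ioi 0) volume := by
    refine hG.congr ?_
    filter_upwards [ae_restrict_mem measurableSet_Ioi] with t ht
    have h2 := ((hF t ht).mul_left ((t:ℂ) ^ (s - 1))).tsum_eq
    rw [h2, mul_comm]
  refine ⟨hInt, ?_⟩
  have hmel : (∫ t in Ioi (0:ℝ), Fn t * (t:ℂ) ^ (s - 1)) = mellin Fn s := by
    rw [mellin]
    refine setIntegral_congr_fun measurableSet_Ioi fun t _ => ?_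
    rw [smul_eq_mul, mul_comm]
  rw [hmel, ← H.tsum_eq, ← tsum_mul_left]
  refine tsum_congr fun i => ?_
  have hr : (0:ℝ) < |lam i| := habs i
  have hrC : ((|lam i| : ℝ) : ℂ) ≠ 0 := Complex.ofReal_ne_zero.mpr hr.ne'
  have hlog : (Complex.log ((|lam i| : ℝ) : ℂ) * 2).im = 0 := by
    rw [← Complex.ofReal_log hr.le]
    simp
  have h2 : ((lam i ^ 2 : ℝ) : ℂ) ^ s = ((|lam i| : ℝ) : ℂ) ^ (2 * s) := by
    rw [Complex.cpow_mul s (by rw [hlog]; linarith [Real.pi_pos])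
      (by rw [hlog]; linarith [Real.pi_pos])]
    congr 1
    rw [show ((2:ℂ)) = ((2:ℕ):ℂ) by norm_num, Complex.cpow_natCast]
    norm_cast
    exact (_root_.sq_abs _).symm
  have hx : ((lam i : ℝ) : ℂ) = (Real.sign (lam i) : ℂ) * ((|lam i| : ℝ) : ℂ) := by
    rw [← Complex.ofReal_mul, sign_mul_abs_eq]
  have hpow : ((|lam i| : ℝ) : ℂ) * ((|lam i| : ℝ) : ℂ) ^ (-(2*s))
      = ((|lam i| : ℝ) : ℂ) ^ (-(2*z)) := by
    have he : -(2*z) = 1 + -(2*s) := by rw [hsdef]; ring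
    rw [he, Complex.cpow_add _ _ hrC, Complex.cpow_one]
  rw [h2, div_eq_mul_inv, ← Complex.cpow_neg, hx, ← hpow]
  ring
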